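/- For every n ≥ 1 and every polynomial p ∈ P_n one has ‖Dp‖_{n+1} ≤ n·‖p‖_n. Moreover, if p ∈ P_n is an odd polynomial, then ‖p‖_n ≤ ‖Dp‖_{n+1}. -/

import Mathlib

open Polynomial Classical

/-- The operator `D` on polynomials: `(Dp)(u) = (1 - u²)·p′(u)`. -/
noncomputable def Dop (p : Polynomial ℂ) : Polynomial ℂ := (1 - X ^ 2) * derivative p

/-- The polynomials τ_n: τ₀ = 1, τ₁ = X, τ_{n+1} = (1/n)·D τ_n for n ≥ 1. -/
noncomputable def tau : ℕ → Polynomial ℂ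
  | 0 => 1
  | 1 => X
  | n + 2 => (((n + 1 : ℕ) : ℂ))⁻¹ • Dop (tau (n + 1))

/-- The norm `‖p‖_n` of a polynomial `p ∈ P_n`: writing `p = Σ_{k=0}^n a_k τ_k`
(the `τ_k` form a basis of `P_n`, so the `a_k` are unique), set
`‖p‖_n = Σ_{k=0}^n |a_k|·(π/2)^{n-k}`. -/
noncomputable def tauNorm (n : ℕ) (p : Polynomial ℂ) : ℝ :=
  if h : ∃ a : ℕ → ℂ, p = ∑ k ∈ Finset.range (n + 1), a k • tau k then
    ∑ k ∈ Finset.range (n + 1), ‖h.choose k‖ * (Real.pi / 2) ^ (n - k)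
  else 0

lemma wb_le_of_lt_succ {d : WithBot ℕ} {k : ℕ} (h : d < ((k+1 : ℕ) : WithBot ℕ)) :
    d ≤ (k : WithBot ℕ) := by
  cases d with
  | bot => exact bot_le
  | coe m =>
    rw [Nat.cast_withBot] at h ⊢
    have hm : m < k + 1 := WithBot.coe_lt_coe.mp (by simpa [Nat.cast_withBot] using h)
    exact WithBot.coe_le_coe.mpr (by omega)

lemma Dop_degree_le (p : Polynomial ℂ) (k : ℕ) (h : p.degree ≤ ((k + 1 : ℕ) : WithBot ℕ)) :
    (Dop p).degree ≤ ((k + 2 : ℕ) : WithBot ℕ) := by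
  unfold Dop
  rcases eq_or_ne p 0 with rfl | hp
  · simp
  have h1 : (derivative p).degree ≤ (k : WithBot ℕ) :=
    wb_le_of_lt_succ (lt_of_lt_of_le (Polynomial.degree_derivative_lt hp) h)
  have h2 : (1 - X ^ 2 : Polynomial ℂ).degree ≤ ((2 : ℕ) : WithBot ℕ) := by
    refine le_trans (degree_sub_le _ _) ?_
    simp [degree_X_pow]
  refine le_trans (degree_mul_le _ _) ?_
  calc (1 - X ^ 2 : Polynomial ℂ).degree + (derivative p).degree
      ≤ ((2 : ℕ) : WithBot ℕ) + (k : WithBot ℕ) := add_le_add h2 h1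
    _ = ((k + 2 : ℕ) : WithBot ℕ) := by
        rw [← Nat.cast_add]; norm_num [add_comm]

lemma tau_degree_le : ∀ n, (tau n).degree ≤ (n : WithBot ℕ) := by
  intro n
  induction n using Nat.strong_induction_on with
  | _ n ih =>
    match n with
    | 0 => simp [tau]
    | 1 => simp [tau, degree_X_le]
    | (m + 2) =>
      show ((((m + 1 : ℕ) : ℂ))⁻¹ • Dop (tau (m + 1))).degree ≤ _
      refine le_trans (degree_smul_le _ _) ?_
      exact Dop_degree_le _ m (ih (m+1) (by omega))

lemma tau_coeff : ∀ n, (tau n).coeff n = if n = 0 then 1 else (-1)^(n+1) := by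
  intro n
  induction n using Nat.strong_induction_on with
  | _ n ih =>
    match n with
    | 0 => simp [tau]
    | 1 => simp [tau]
    | (m + 2) =>
      have ihm := ih (m+1) (by omega)
      show ((((m + 1 : ℕ) : ℂ))⁻¹ • Dop (tau (m + 1))).coeff (m+2) = _
      have hd : (derivative (tau (m+1))).coeff (m + 2) = 0 := by
        apply coeff_eq_zero_of_degree_lt
        refine lt_of_le_of_lt (degree_derivative_le) ?_
        exact lt_of_le_of_lt (tau_degree_le (m+1)) (by exact_mod_cast Nat.lt_succ_self (m+1))
      have hD : (Dop (tau (m+1))).coeff (m+2)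
          = - ((m+1 : ℕ) : ℂ) * (tau (m+1)).coeff (m+1) := by
        unfold Dop
        rw [sub_mul, one_mul, coeff_sub, hd, zero_sub]
        have : (X ^ 2 * derivative (tau (m+1))).coeff (m + 2)
            = (derivative (tau (m+1))).coeff m := by
          have := Polynomial.coeff_X_pow_mul (derivative (tau (m+1))) 2 m
          simpa [add_comm] using this
        rw [this, coeff_derivative, ihm]
        push_cast
        ring
      rw [coeff_smul, hD, ihm]
      have hm1 : ((m : ℂ) + 1) ≠ 0 := by exact_mod_cast Nat.succ_ne_zero m
      simp only [Nat.succ_ne_zero, if_false, smul_eq_mul]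
      push_cast
      field_simp
      ring

lemma tau_coeff_ne (m : ℕ) : (tau m).coeff m ≠ 0 := by
  rw [tau_coeff]; split
  · exact one_ne_zero
  · exact pow_ne_zero _ (by norm_num)

lemma tau_indep (m : ℕ) : ∀ (c : ℕ → ℂ), (∑ k ∈ Finset.range m, c k • tau k) = 0 →
    ∀ k, k < m → c k = 0 := by
  induction m with
  | zero => intro c h k hk; omega
  | succ m ih =>
    intro c h k hk
    have hcm : c m = 0 := by
      have h0 : (∑ k ∈ Finset.range (m+1), c k • tau k).coeff m = 0 := by rw [h]; simp
      rw [Polynomial.finset_sum_coeff, Finset.sum_range_succ] at h0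
      have hz : ∑ k ∈ Finset.range m, (c k • tau k).coeff m = 0 := by
        apply Finset.sum_eq_zero
        intro j hj
        have hdeg : (tau j).coeff m = 0 := by
          apply coeff_eq_zero_of_degree_lt
          refine lt_of_le_of_lt (tau_degree_le j) ?_
          exact_mod_cast Finset.mem_range.mp hj
        simp [coeff_smul, hdeg]
      rw [hz, zero_add, coeff_smul, smul_eq_mul] at h0
      exact (mul_eq_zero.mp h0).resolve_right (tau_coeff_ne m)
    rcases Nat.lt_succ_iff_lt_or_eq.mp hk with hk' | rfl
    · apply ih c ?_ k hk'
      rwa [Finset.sum_range_succ, hcm, zero_smul, add_zero] at h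
    · exact hcm

lemma tau_unique (m : ℕ) (a b : ℕ → ℂ)
    (h : ∑ k ∈ Finset.range m, a k • tau k = ∑ k ∈ Finset.range m, b k • tau k) :
    ∀ k, k < m → a k = b k := by
  intro k hk
  have h0 : (∑ k ∈ Finset.range m, (a k - b k) • tau k) = 0 := by
    simp only [sub_smul, Finset.sum_sub_distrib, h, sub_self]
  exact sub_eq_zero.mp (tau_indep m _ h0 k hk)

lemma tau_span : ∀ (n : ℕ) (p : Polynomial ℂ), p.degree ≤ (n : WithBot ℕ) →
    ∃ a : ℕ → ℂ, p = ∑ k ∈ Finset.range (n+1), a k • tau k := by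
  intro n
  induction n with
  | zero =>
    intro p hp
    refine ⟨fun _ => p.coeff 0, ?_⟩
    have := Polynomial.eq_C_of_degree_le_zero (by exact_mod_cast hp)
    rw [this]
    simp [tau, Polynomial.smul_eq_C_mul]
  | succ n ih =>
    intro p hp
    set c := p.coeff (n+1) / (tau (n+1)).coeff (n+1) with hc
    have hne := tau_coeff_ne (n+1)
    have hq : (p - c • tau (n+1)).degree ≤ (n : WithBot ℕ) := by
      rw [Polynomial.degree_le_iff_coeff_zero]
      intro m hm
      have hm' : n < m := by exact_mod_cast hm
      rw [coeff_sub, coeff_smul, smul_eq_mul]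
      rcases eq_or_lt_of_le (Nat.succ_le_of_lt hm') with rfl | hm2
      · rw [hc]; field_simp; simp
      · have h1 : p.coeff m = 0 := by
          apply coeff_eq_zero_of_degree_lt
          exact lt_of_le_of_lt hp (by exact_mod_cast hm2)
        have h2 : (tau (n+1)).coeff m = 0 := by
          apply coeff_eq_zero_of_degree_lt
          exact lt_of_le_of_lt (tau_degree_le (n+1)) (by exact_mod_cast hm2)
        rw [h1, h2, mul_zero, sub_zero]
    obtain ⟨a, ha⟩ := ih _ hq
    refine ⟨fun k => if k = n+1 then c else a k, ?_⟩
    rw [Finset.sum_range_succ]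
    have hcongr : ∑ k ∈ Finset.range (n+1), (if k = n+1 then c else a k) • tau k
        = ∑ k ∈ Finset.range (n+1), a k • tau k :=
      Finset.sum_congr rfl (fun k hk => by
        rw [if_neg (by have := Finset.mem_range.mp hk; omega)])
    rw [hcongr, ← ha]
    simp

lemma tauNorm_eq (n : ℕ) (a : ℕ → ℂ) :
    tauNorm n (∑ k ∈ Finset.range (n+1), a k • tau k)
      = ∑ k ∈ Finset.range (n+1), ‖a k‖ * (Real.pi/2)^(n-k) := by
  have h : ∃ b : ℕ → ℂ, (∑ k ∈ Finset.range (n+1), a k • tau k)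
      = ∑ k ∈ Finset.range (n+1), b k • tau k := ⟨a, rfl⟩
  rw [tauNorm, dif_pos h]
  refine Finset.sum_congr rfl (fun k hk => ?_)
  rw [tau_unique (n+1) h.choose a h.choose_spec.symm k (Finset.mem_range.mp hk)]

lemma Dop_smul (c : ℂ) (q : Polynomial ℂ) : Dop (c • q) = c • Dop q := by
  unfold Dop
  rw [derivative_smul, mul_smul_comm]

lemma Dop_sum (s : Finset ℕ) (f : ℕ → Polynomial ℂ) :
    Dop (∑ k ∈ s, f k) = ∑ k ∈ s, Dop (f k) := by
  unfold Dop
  rw [derivative_sum, Finset.mul_sum]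

lemma Dop_tau (k : ℕ) : Dop (tau k) = (k : ℂ) • tau (k+1) := by
  match k with
  | 0 => simp [tau, Dop]
  | (m+1) =>
    have hne : ((m+1 : ℕ) : ℂ) ≠ 0 := by exact_mod_cast Nat.succ_ne_zero m
    rw [show tau (m+2) = (((m + 1 : ℕ) : ℂ))⁻¹ • Dop (tau (m + 1)) from rfl,
      smul_smul, mul_inv_cancel₀ hne, one_smul]

lemma Dop_comp_neg (q : Polynomial ℂ) : (Dop q).comp (-X) = - Dop (q.comp (-X)) := by
  unfold Dop
  rw [mul_comp, sub_comp, one_comp, pow_comp, X_comp]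
  have hder : derivative (q.comp (-X)) = - (derivative q).comp (-X) := by
    rw [derivative_comp]; simp
  rw [hder, neg_sq]
  ring

lemma sum_comp' (s : Finset ℕ) (f : ℕ → Polynomial ℂ) (q : Polynomial ℂ) :
    (∑ k ∈ s, f k).comp q = ∑ k ∈ s, (f k).comp q := by
  simp [Polynomial.comp, Polynomial.eval₂_finset_sum]

lemma tau_comp_neg : ∀ k, (tau k).comp (-X) = ((-1 : ℂ)^k) • tau k := by
  intro k
  induction k using Nat.strong_induction_on with
  | _ k ih =>
    match k with
    | 0 => simp [tau]
    | 1 => simp [tau]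
    | (m+2) =>
      show ((((m + 1 : ℕ) : ℂ))⁻¹ • Dop (tau (m + 1))).comp (-X) = _
      rw [smul_comp, Dop_comp_neg, ih (m+1) (by omega), Dop_smul,
        show tau (m+2) = (((m + 1 : ℕ) : ℂ))⁻¹ • Dop (tau (m + 1)) from rfl,
        smul_smul, smul_neg, smul_smul, ← neg_smul]
      congr 1
      ring


theorem stmt_1 (n : ℕ) (hn : 1 ≤ n) (p : Polynomial ℂ) (hp : p.degree ≤ (n : WithBot ℕ)) :
    tauNorm (n + 1) (Dop p) ≤ (n : ℝ) * tauNorm n p ∧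
    ((∀ x : ℂ, p.eval (-x) = -p.eval x) → tauNorm n p ≤ tauNorm (n + 1) (Dop p)) := by
  obtain ⟨a, ha⟩ := tau_span n p hp
  set b : ℕ → ℂ := fun j => if j = 0 then 0 else ((j - 1 : ℕ) : ℂ) * a (j - 1) with hb
  have hterm : ∀ k : ℕ, Dop (a k • tau k) = (((k : ℕ) : ℂ) * a k) • tau (k+1) := by
    intro k
    rw [Dop_smul, Dop_tau, smul_smul, mul_comm]
  have hDp : Dop p = ∑ j ∈ Finset.range (n + 2), b j • tau j := by
    rw [ha, Dop_sum, Finset.sum_range_succ' (fun j => b j • tau j) (n+1)]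
    simp only [hterm, hb]
    simp only [Nat.succ_ne_zero, if_false, Nat.add_sub_cancel]
    simp
  have hnorm_p : tauNorm n p
      = ∑ k ∈ Finset.range (n+1), ‖a k‖ * (Real.pi/2)^(n-k) := by
    rw [ha, tauNorm_eq]
  have hq0 : (0:ℝ) ≤ Real.pi / 2 := by positivity
  have hnorm_D : tauNorm (n+1) (Dop p)
      = ∑ k ∈ Finset.range (n+1), (k : ℝ) * (‖a k‖ * (Real.pi/2)^(n-k)) := by
    rw [hDp, tauNorm_eq, Finset.sum_range_succ'
      (fun k => ‖b k‖ * (Real.pi/2)^(n+1-k)) (n+1)]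
    have hb0 : ‖b 0‖ = 0 := by simp [hb]
    rw [hb0, zero_mul, add_zero]
    refine Finset.sum_congr rfl (fun k hk => ?_)
    have hbk : b (k+1) = ((k:ℕ):ℂ) * a k := by simp [hb]
    rw [hbk, Nat.succ_sub_succ, norm_mul, Complex.norm_natCast, mul_assoc]
  constructor
  · rw [hnorm_D, hnorm_p, Finset.mul_sum]
    refine Finset.sum_le_sum (fun k hk => ?_)
    have hk' : (k:ℝ) ≤ (n:ℝ) := by
      exact_mod_cast Nat.lt_succ_iff.mp (Finset.mem_range.mp hk)
    have hnn : 0 ≤ ‖a k‖ * (Real.pi/2)^(n-k) := by positivity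
    exact mul_le_mul_of_nonneg_right hk' hnn
  · intro hodd
    have hcomp : p.comp (-X) = -p := by
      apply Polynomial.funext
      intro x
      rw [eval_comp]
      simp [hodd x]
    have hEq : ∀ k, k < n + 1 → ((-1:ℂ)^k) * a k = - a k := by
      apply tau_unique (n+1) (fun k => ((-1:ℂ)^k) * a k) (fun k => - a k)
      have hL : ∑ k ∈ Finset.range (n+1), (((-1:ℂ)^k) * a k) • tau k = p.comp (-X) := by
        rw [ha, sum_comp']
        refine Finset.sum_congr rfl (fun k hk => ?_)
        rw [smul_comp, tau_comp_neg, smul_smul, mul_comm]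
      have hR : ∑ k ∈ Finset.range (n+1), (- a k) • tau k = -p := by
        rw [ha, ← Finset.sum_neg_distrib]
        refine Finset.sum_congr rfl (fun k hk => ?_)
        rw [neg_smul]
      rw [hL, hR, hcomp]
    have hkeven : ∀ k, k < n + 1 → Even k → a k = 0 := by
      intro k hk hke
      have := hEq k hk
      rw [hke.neg_one_pow, one_mul] at this
      exact add_self_eq_zero.mp (eq_neg_iff_add_eq_zero.mp this)
    rw [hnorm_D, hnorm_p]
    refine Finset.sum_le_sum (fun k hk => ?_)
    by_cases hk0 : a k = 0
    · simp [hk0]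
    · have hnev : ¬ Even k := fun he => hk0 (hkeven k (Finset.mem_range.mp hk) he)
      have h1 : (1:ℝ) ≤ (k:ℝ) := by
        have : k ≠ 0 := fun h0 => hnev (h0 ▸ Even.zero)
        exact_mod_cast Nat.one_le_iff_ne_zero.mpr this
      have hnn : 0 ≤ ‖a k‖ * (Real.pi/2)^(n-k) := by positivity
      nlinarith
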